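/- Let s ≥ 0, 0 < a < 1, ν > 0, and let f : [0,∞) → ℂ be continuously differentiable with compact support contained in [0, M]. Then ‖S(t)f − f‖_s → 0 as t → 0, where (S(t)f)(x) = f(|x^{1-a} + ν(1-a)t|^{1/(1-a)}) and ‖g‖_s = sup_{x≥0} |g(x)| / ((1 + e^{s x^{1-a}})(1 + e^{-s x^{1-a}})). -/
import Mathlib

theorem strong_continuity (s a ν M : ℝ) (hs : 0 ≤ s) (ha : 0 < a) (ha1 : a < 1) (hν : 0 < ν)
    (f : ℝ → ℂ) (hf : ContDiff ℝ 1 f) (hsupp : tsupport f ⊆ Set.Icc 0 M)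
    (w : ℝ → ℝ)
    (hw : ∀ x, w x = (1 + Real.exp (s * x ^ (1 - a))) * (1 + Real.exp (-(s * x ^ (1 - a)))))
    (S : ℝ → (ℝ → ℂ) → ℝ → ℂ)
    (hS : ∀ t g x, S t g x = g (|x ^ (1 - a) + ν * (1 - a) * t| ^ (1 / (1 - a)))) :
    Filter.Tendsto (fun t : ℝ => ⨆ x : Set.Ici (0:ℝ), ‖S t f x - f x‖ / w x)
      (nhds 0) (nhds 0) := by
  have hb : 0 < 1 - a := by linarith
  set b := 1 - a with hbdef
  set c := ν * b with hcdef
  have hc : 0 < c := by positivity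
  set g : ℝ → ℂ := fun u => f (|u| ^ (1 / b)) with hg
  have hgc : Continuous g := by
    apply hf.continuous.comp
    rw [continuous_iff_continuousAt]
    intro u
    exact (Real.continuousAt_rpow_const _ _ (Or.inr (by positivity))).comp
      continuous_abs.continuousAt
  have hinvb : (1 / b) * b = 1 := by field_simp
  have hN : HasCompactSupport g := by
    apply HasCompactSupport.intro (isCompact_Icc (a := -(max M 0 ^ b)) (b := max M 0 ^ b))
    intro u hu
    by_contra h
    have hmem : |u| ^ (1/b) ∈ tsupport f := subset_tsupport f h
    have hle : |u| ^ (1/b) ≤ max M 0 := le_max_of_le_left (hsupp hmem).2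
    have h2 : (|u| ^ (1/b)) ^ b ≤ max M 0 ^ b :=
      Real.rpow_le_rpow (Real.rpow_nonneg (abs_nonneg u) _) hle hb.le
    rw [← Real.rpow_mul (abs_nonneg u), hinvb, Real.rpow_one] at h2
    exact hu (Set.mem_Icc.mpr (abs_le.mp h2))
  have hUC : UniformContinuous g :=
    hgc.uniformContinuous_of_tendsto_cocompact hN.is_zero_at_infty
  have hw1 : ∀ x : ℝ, 1 ≤ w x := by
    intro x
    rw [hw]
    nlinarith [Real.exp_pos (s * x ^ b), Real.exp_pos (-(s * x ^ b))]
  haveI : Nonempty (Set.Ici (0:ℝ)) := Set.nonempty_Ici.to_subtype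
  rw [Metric.tendsto_nhds_nhds]
  intro ε hε
  obtain ⟨δ, hδ, hδ2⟩ := Metric.uniformContinuous_iff.mp hUC (ε/2) (by linarith)
  refine ⟨δ / c, by positivity, ?_⟩
  intro t ht
  rw [Real.dist_eq, sub_zero] at ht
  have key : ∀ x : ℝ, 0 ≤ x → ‖S t f x - f x‖ / w x ≤ ε/2 := by
    intro x hx
    have hxb : (0:ℝ) ≤ x ^ b := Real.rpow_nonneg hx b
    have e1 : S t f x = g (x ^ b + c * t) := by
      rw [hS]
    have e2 : f x = g (x ^ b) := by
      simp only [hg, abs_of_nonneg hxb]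
      rw [← Real.rpow_mul hx, mul_one_div_cancel hb.ne', Real.rpow_one]
    have hdist : dist (x ^ b + c * t) (x ^ b) < δ := by
      rw [Real.dist_eq, add_sub_cancel_left, abs_mul, abs_of_nonneg hc.le]
      calc c * |t| < c * (δ / c) := by
            apply mul_lt_mul_of_pos_left ht hc
        _ = δ := by field_simp
    have hnorm : ‖S t f x - f x‖ < ε / 2 := by
      rw [e1, e2, ← dist_eq_norm]
      exact hδ2 hdist
    calc ‖S t f x - f x‖ / w x ≤ ‖S t f x - f x‖ :=
          div_le_self (norm_nonneg _) (hw1 x)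
      _ ≤ ε / 2 := hnorm.le
  have hsup : (⨆ x : Set.Ici (0:ℝ), ‖S t f x - f x‖ / w x) ≤ ε/2 :=
    ciSup_le fun x => key x x.2
  have hnn : 0 ≤ ⨆ x : Set.Ici (0:ℝ), ‖S t f x - f x‖ / w x :=
    Real.iSup_nonneg fun x =>
      div_nonneg (norm_nonneg _) (le_trans zero_le_one (hw1 x))
  rw [Real.dist_eq, sub_zero, abs_of_nonneg hnn]
  linarith
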